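/- Let Σ = ⟨Γ_O, Γ_V, Δ⟩ be an ER specification over a schema S such that no denial constraint in Δ contains inequality atoms, let D be an S-database, and let ⟨E,V⟩ ∈ Sol(D,Σ). Call a pair α soft-applicable at ⟨E,V⟩ if α ∉ E ∪ V and either α = (o,o') with (o,o') ∈ q(D_{E,V}) for some soft rule q(x,y) ⇢ EqO(x,y) ∈ Γ_s^o, or α = (⟨t,i⟩,⟨t',i'⟩) with (t,t') ∈ q(D_{E,V}) for some soft rule q(x_t,y_t) ⇢ EqV(⟨x_t,i⟩,⟨y_t,i'⟩) ∈ Γ_s^v. Then ⟨E,V⟩ ∈ MaxSol(D,Σ) if and only if for every soft-applicable pair α at ⟨E,V⟩, the hard closure ⟨E_α,V_α⟩ of the candidate solution obtained from ⟨E,V⟩ by adding α (namely ⟨EqRel(E ∪ {α}, Obj(D)), V⟩ if α is a pair of objects, and ⟨E, EqRel(V ∪ {α}, Cells(D))⟩ if α is a pair of cells) satisfies D_{E_α,V_α} ⊭ Δ. -/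

import Mathlib

namespace LacePlus

/-! ### Constants -/

/-- Sorts of constants: objects, values, tuple identifiers. -/
inductive CKind
  | obj | val | tid
deriving DecidableEq

/-- Constants: three pairwise disjoint infinite sets (objects, values, tids),
each indexed by the natural numbers. -/
structure Const where
  kind : CKind
  id : ℕ
deriving DecidableEq

/-- A (value) cell: a tuple id together with a position. -/
abbrev Cell := ℕ × ℕ

abbrev ERel := Set (Const × Const)
abbrev VRel := Set (Cell × Cell)

/-- A family of binary similarity predicates on constants. -/
abbrev SimFam := ℕ → Const → Const → Prop

def tidC (t : ℕ) : Const := ⟨CKind.tid, t⟩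

/-! ### Schemas and databases -/

/-- A database schema: a finite set of relation symbols (coded by naturals),
each with an arity and a type vector (`isObjPos R i = true` iff position `i`
of `R` is an object position). -/
structure Schema where
  rels : Finset ℕ
  arity : ℕ → ℕ
  isObjPos : ℕ → ℕ → Bool

/-- A fact `R(t, c₁, …, c_k)`. -/
structure Fact where
  rel : ℕ
  tid : ℕ
  args : List Const
deriving DecidableEq

/-- The constant in position `i ∈ {1,…,k}` of a fact. -/
def Fact.arg (f : Fact) (i : ℕ) : Option Const :=
  if i = 0 then none else f.args[i - 1]?

/-- A (TID-annotated) `S`-database: a finite set of facts, with relation symbols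
from `S`, correct arities, and each tid occurring in at most one fact. -/
structure DB (S : Schema) where
  facts : Finset Fact
  rels_mem : ∀ f ∈ facts, f.rel ∈ S.rels
  arity_eq : ∀ f ∈ facts, f.args.length = S.arity f.rel
  tid_unique : ∀ f ∈ facts, ∀ f' ∈ facts, f.tid = f'.tid → f = f'

/-- `Dom(D)`: the constants occurring in `D`. -/
def DomD {S : Schema} (D : DB S) : Set Const :=
  {c | ∃ f ∈ D.facts, c ∈ f.args}

/-- `Obj(D)`: the constants occurring in object positions of `D` (w.r.t. `S`). -/
def ObjD (S : Schema) (D : DB S) : Set Const :=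
  {c | ∃ f ∈ D.facts, ∃ i, S.isObjPos f.rel i = true ∧ f.arg i = some c}

/-- `Cells(D)`: the value cells of `D` (w.r.t. `S`). -/
def CellsD (S : Schema) (D : DB S) : Set Cell :=
  {p | ∃ f ∈ D.facts, f.tid = p.1 ∧ 1 ≤ p.2 ∧ p.2 ≤ S.arity f.rel ∧
        S.isObjPos f.rel p.2 = false}

/-- `t[i] = c` in `D`. -/
def DB.HasVal {S : Schema} (D : DB S) (t i : ℕ) (c : Const) : Prop :=
  ∃ f ∈ D.facts, f.tid = t ∧ f.arg i = some c

/-- `D` is well-typed over `S`: object positions hold object constants and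
value positions hold value constants. -/
def WellTyped (S : Schema) (D : DB S) : Prop :=
  ∀ f ∈ D.facts, ∀ i c, f.arg i = some c →
    (S.isObjPos f.rel i = true → c.kind = CKind.obj) ∧
    (S.isObjPos f.rel i = false → c.kind = CKind.val)

/-! ### Equivalence relations -/

/-- `R` is an equivalence relation on the set `X` (as set of pairs). -/
def IsEquivOn {α : Type} (X : Set α) (R : Set (α × α)) : Prop :=
  R ⊆ X ×ˢ X ∧ (∀ x ∈ X, (x, x) ∈ R) ∧
  (∀ x y, (x, y) ∈ R → (y, x) ∈ R) ∧
  (∀ x y z, (x, y) ∈ R → (y, z) ∈ R → (x, z) ∈ R)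

/-- `EqRel(P, X)`: the smallest equivalence relation on `X` extending `P`. -/
def EqRel {α : Type} (P : Set (α × α)) (X : Set α) : Set (α × α) :=
  ⋂₀ {R | IsEquivOn X R ∧ P ⊆ R}

/-! ### Queries -/

inductive Term
  | var (v : ℕ)
  | const (c : Const)
deriving DecidableEq

/-- Atoms: relational atoms `R(u₀,u₁,…,u_k)` (with `u₀` a tid term),
similarity atoms `u ≈ₛ u'`, and inequality atoms `u ≠ u'`. -/
inductive Atom
  | rel (R : ℕ) (ts : List Term)
  | sim (s : ℕ) (u u' : Term)
  | neq (u u' : Term)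
deriving DecidableEq

def Atom.terms : Atom → List Term
  | .rel _ ts => ts
  | .sim _ u u' => [u, u']
  | .neq u u' => [u, u']

def Atom.isRel : Atom → Prop
  | .rel _ _ => True
  | _ => False

def Atom.isSim : Atom → Prop
  | .sim _ _ _ => True
  | _ => False

def Atom.isNeq : Atom → Prop
  | .neq _ _ => True
  | _ => False

/-- The (Boolean) query contains no inequality atoms. -/
def NoNeq (q : List Atom) : Prop := ∀ a ∈ q, ¬ a.isNeq

def OccursVar (q : List Atom) (v : ℕ) : Prop := ∃ a ∈ q, Term.var v ∈ a.terms

/-! ### Induced extended databases and query satisfaction (Definition 3) -/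

/-- The set of constants in position `i ≥ 1` of fact `f` in the extended
database `D_{E,W}`: the `E`-class of `f`'s `i`-th constant for object
positions, and the set of values of `W`-related cells for value positions. -/
def extArg {S : Schema} (D : DB S) (E : ERel) (W : VRel) (f : Fact) (i : ℕ) : Set Const :=
  if S.isObjPos f.rel i = true then
    {o' | ∃ o, f.arg i = some o ∧ (o, o') ∈ E}
  else
    {c | ∃ p : Cell, ((f.tid, i), p) ∈ W ∧ D.HasVal p.1 p.2 c}

/-- Requirement 2 of Definition 3, for a single relational atom with
assignment `g` to its positions. -/
def SatRelAtom {S : Schema} (D : DB S) (E : ERel) (W : VRel)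
    (g : ℕ → Set Const) (R : ℕ) (ts : List Term) : Prop :=
  ∃ f ∈ D.facts, f.rel = R ∧ ts.length = S.arity R + 1 ∧
    g 0 = {tidC f.tid} ∧
    (∀ i, 1 ≤ i → i ≤ S.arity R → g i = extArg D E W f i) ∧
    (∀ i c, ts[i]? = some (Term.const c) → c ∈ g i)

/-- The function `h` determined by the family `g` (Requirement 1 of
Definition 3): `h(a) = {a}` for constants, and for a variable the
intersection of the `g j i` over all its occurrences in relational atoms. -/
def hTerm (q : List Atom) (g : ℕ → ℕ → Set Const) : Term → Set Const
  | .const c => {c}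
  | .var v => {c | ∀ j R ts, q[j]? = some (Atom.rel R ts) →
      ∀ i, ts[i]? = some (Term.var v) → c ∈ g j i}

/-- `D_{E,W} ⊨ q` for a Boolean query `q` (Definition 3). -/
def Sat (sim : SimFam) {S : Schema} (D : DB S) (E : ERel) (W : VRel)
    (q : List Atom) : Prop :=
  ∃ g : ℕ → ℕ → Set Const,
    (∀ v, OccursVar q v → (hTerm q g (Term.var v)).Nonempty) ∧
    (∀ j R ts, q[j]? = some (Atom.rel R ts) → SatRelAtom D E W (g j) R ts) ∧
    (∀ (j : ℕ) u u', q[j]? = some (Atom.neq u u') → hTerm q g u ∩ hTerm q g u' = ∅) ∧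
    (∀ (j : ℕ) s u u', q[j]? = some (Atom.sim s u u') →
      ∃ c ∈ hTerm q g u, ∃ c' ∈ hTerm q g u', sim s c c')

/-! ### Substitution and answers -/

def Term.subst (σ : ℕ → Option Const) : Term → Term
  | .var v =>
    match σ v with
    | some c => .const c
    | none => .var v
  | .const c => .const c

def Atom.subst (σ : ℕ → Option Const) : Atom → Atom
  | .rel R ts => .rel R (ts.map (Term.subst σ))
  | .sim s u u' => .sim s (u.subst σ) (u'.subst σ)
  | .neq u u' => .neq (u.subst σ) (u'.subst σ)

def substQ (q : List Atom) (σ : ℕ → Option Const) : List Atom :=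
  q.map (Atom.subst σ)

def pairSubst (x y : ℕ) (a b : Const) : ℕ → Option Const :=
  fun v => if v = x then some a else if v = y then some b else none

/-- An `n`-ary conjunctive query: a list of atoms together with its tuple
of free (answer) variables. -/
structure CQ where
  atoms : List Atom
  free : List ℕ

/-- `q[c⃗]`: the Boolean query obtained by substituting the tuple `cs`
for the free variables of `q`. -/
def CQ.substTuple (q : CQ) (cs : List Const) : List Atom :=
  substQ q.atoms (fun v => (q.free.findIdx? (fun w => w = v)).bind fun k => cs[k]?)

/-! ### Rules and specifications -/

/-- A rule for objects, `q(x,y) → EqO(x,y)`. -/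
structure ObjRule where
  body : List Atom
  x : ℕ
  y : ℕ
deriving DecidableEq

/-- A rule for values, `q(x_t,y_t) → EqV(⟨x_t,i⟩,⟨y_t,j⟩)`. -/
structure ValRule where
  body : List Atom
  xt : ℕ
  yt : ℕ
  i : ℕ
  j : ℕ
deriving DecidableEq

/-- `(o,o') ∈ q(D_{E,W})` for the body of an object rule. -/
def AnswerO (sim : SimFam) {S : Schema} (D : DB S) (E : ERel) (W : VRel)
    (r : ObjRule) (o o' : Const) : Prop :=
  Sat sim D E W (substQ r.body (pairSubst r.x r.y o o'))

/-- `(t,t') ∈ q(D_{E,W})` for the body of a value rule. -/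
def AnswerV (sim : SimFam) {S : Schema} (D : DB S) (E : ERel) (W : VRel)
    (r : ValRule) (t t' : ℕ) : Prop :=
  Sat sim D E W (substQ r.body (pairSubst r.xt r.yt (tidC t) (tidC t')))

/-- `D_{E,W}` satisfies the object rule `r`: `q(D_{E,W}) ⊆ E`. -/
def SatObjRule (sim : SimFam) {S : Schema} (D : DB S) (E : ERel) (W : VRel)
    (r : ObjRule) : Prop :=
  ∀ o o', AnswerO sim D E W r o o' → (o, o') ∈ E

/-- `D_{E,W}` satisfies the value rule `r`. -/
def SatValRule (sim : SimFam) {S : Schema} (D : DB S) (E : ERel) (W : VRel)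
    (r : ValRule) : Prop :=
  ∀ t t', AnswerV sim D E W r t t' → ((t, r.i), (t', r.j)) ∈ W

/-- A LACE⁺ ER specification `Σ = ⟨Γ_O, Γ_V, Δ⟩` (hard/soft rules for objects,
hard/soft rules for values, denial constraints). -/
structure ERSpec where
  hardO : List ObjRule
  softO : List ObjRule
  hardV : List ValRule
  softV : List ValRule
  dcs : List (List Atom)

/-! ### Well-formedness -/

/-- Variable `v` occurs only in object positions (w.r.t. `S`) of the
relational atoms of `q`. -/
def OnlyObjPos (S : Schema) (q : List Atom) (v : ℕ) : Prop :=
  ∀ a ∈ q,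
    (∀ R ts, a = Atom.rel R ts → ∀ i, ts[i]? = some (Term.var v) →
      1 ≤ i ∧ i ≤ S.arity R ∧ S.isObjPos R i = true) ∧
    (¬ a.isRel → Term.var v ∉ a.terms)

/-- A well-formed rule for objects: no inequality atoms, and the free
variables occur, and occur only in object positions. -/
def ObjRule.WF (S : Schema) (r : ObjRule) : Prop :=
  NoNeq r.body ∧ OccursVar r.body r.x ∧ OccursVar r.body r.y ∧
  OnlyObjPos S r.body r.x ∧ OnlyObjPos S r.body r.y

/-- `v` occurs exactly once in `q`, namely at position 0 of the relational
atom number `jx`, whose relation symbol is `Rx`. -/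
def UniqueTidOcc (q : List Atom) (v : ℕ) (jx Rx : ℕ) : Prop :=
  (∃ ts, q[jx]? = some (Atom.rel Rx ts) ∧ ts[0]? = some (Term.var v)) ∧
  (∀ j R ts, q[j]? = some (Atom.rel R ts) → ∀ p, ts[p]? = some (Term.var v) →
    j = jx ∧ p = 0) ∧
  (∀ a ∈ q, ¬ a.isRel → Term.var v ∉ a.terms)

/-- A well-formed rule for values: no inequality atoms, `x_t` and `y_t` each
occur exactly once, at position 0 of relational atoms with relations `R_x`,
`R_y`, and `i`, `j` are value positions of `R_x`, `R_y`. -/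
def ValRule.WF (S : Schema) (r : ValRule) : Prop :=
  NoNeq r.body ∧
  ∃ jx Rx jy Ry, UniqueTidOcc r.body r.xt jx Rx ∧ UniqueTidOcc r.body r.yt jy Ry ∧
    1 ≤ r.i ∧ r.i ≤ S.arity Rx ∧ S.isObjPos Rx r.i = false ∧
    1 ≤ r.j ∧ r.j ≤ S.arity Ry ∧ S.isObjPos Ry r.j = false

/-- A well-formed denial constraint: a Boolean CQ with inequality atoms
(no similarity atoms), safe: each variable of an inequality atom occurs in
some relational atom. -/
def DCWF (δ : List Atom) : Prop :=
  (∀ a ∈ δ, ¬ a.isSim) ∧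
  (∀ a ∈ δ, ∀ u u', a = Atom.neq u u' →
    ∃ v v', u = Term.var v ∧ u' = Term.var v' ∧
      (∃ b ∈ δ, ∃ R ts, b = Atom.rel R ts ∧ Term.var v ∈ ts) ∧
      (∃ b ∈ δ, ∃ R ts, b = Atom.rel R ts ∧ Term.var v' ∈ ts))

/-- Well-formed ER specification over `S`. -/
def ERSpec.WF (S : Schema) (Sp : ERSpec) : Prop :=
  (∀ r ∈ Sp.hardO, r.WF S) ∧ (∀ r ∈ Sp.softO, r.WF S) ∧
  (∀ r ∈ Sp.hardV, r.WF S) ∧ (∀ r ∈ Sp.softV, r.WF S) ∧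
  (∀ δ ∈ Sp.dcs, DCWF δ)

/-! ### Candidate solutions and solutions (Definition 4) -/

inductive CandSol (sim : SimFam) {S : Schema} (D : DB S) (Sp : ERSpec) :
    ERel → VRel → Prop
  | base : CandSol sim D Sp (EqRel ∅ (ObjD S D)) (EqRel ∅ (CellsD S D))
  | stepO {E : ERel} {W : VRel} {o o' : Const} (r : ObjRule) :
      r ∈ Sp.hardO ∨ r ∈ Sp.softO → CandSol sim D Sp E W →
      AnswerO sim D E W r o o' →
      CandSol sim D Sp (EqRel (E ∪ {(o, o')}) (ObjD S D)) W
  | stepV {E : ERel} {W : VRel} {t t' : ℕ} (r : ValRule) :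
      r ∈ Sp.hardV ∨ r ∈ Sp.softV → CandSol sim D Sp E W →
      AnswerV sim D E W r t t' →
      CandSol sim D Sp E (EqRel (W ∪ {((t, r.i), (t', r.j))}) (CellsD S D))

/-- `D_{E,W}` satisfies all hard rules of `Sp`. -/
def SatHard (sim : SimFam) {S : Schema} (D : DB S) (Sp : ERSpec)
    (E : ERel) (W : VRel) : Prop :=
  (∀ r ∈ Sp.hardO, SatObjRule sim D E W r) ∧
  (∀ r ∈ Sp.hardV, SatValRule sim D E W r)

/-- `⟨E,W⟩ ∈ Sol(D,Σ)`: a candidate solution whose induced database satisfies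
all hard rules and all denial constraints. -/
def Solution (sim : SimFam) {S : Schema} (D : DB S) (Sp : ERSpec)
    (E : ERel) (W : VRel) : Prop :=
  CandSol sim D Sp E W ∧ SatHard sim D Sp E W ∧
  (∀ δ ∈ Sp.dcs, ¬ Sat sim D E W δ)

/-- `⟨E,W⟩ ∈ MaxSol(D,Σ)`: a solution such that no solution `⟨E',W'⟩`
satisfies `E ∪ V ⊊ E' ∪ V'`. -/
def MaxSolution (sim : SimFam) {S : Schema} (D : DB S) (Sp : ERSpec)
    (E : ERel) (W : VRel) : Prop :=
  Solution sim D Sp E W ∧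
  ¬ ∃ E' W', Solution sim D Sp E' W' ∧ E ⊆ E' ∧ W ⊆ W' ∧ ¬ (E' ⊆ E ∧ W' ⊆ W)

/-! ### Hard closure -/

/-- `⟨Eh,Wh⟩` is the hard closure of the candidate solution `⟨E0,W0⟩`:
the least candidate solution extending `⟨E0,W0⟩` that satisfies all hard
rules. -/
def IsHardClosure (sim : SimFam) {S : Schema} (D : DB S) (Sp : ERSpec)
    (E0 : ERel) (W0 : VRel) (Eh : ERel) (Wh : VRel) : Prop :=
  CandSol sim D Sp Eh Wh ∧ E0 ⊆ Eh ∧ W0 ⊆ Wh ∧ SatHard sim D Sp Eh Wh ∧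
  ∀ E W, CandSol sim D Sp E W → E0 ⊆ E → W0 ⊆ W → SatHard sim D Sp E W →
    Eh ⊆ E ∧ Wh ⊆ W

/-! ### The simulation construction -/

/-- The schema `S_V`: `S` with all object positions changed to value
positions. -/
def Schema.toValSchema (S : Schema) : Schema :=
  { rels := S.rels, arity := S.arity, isObjPos := fun _ _ => false }

/-- `D^V`: the database `D` viewed as an `S_V`-database (all object constants
treated as value constants). -/
def DB.toVal {S : Schema} (D : DB S) : DB S.toValSchema :=
  { facts := D.facts
    rels_mem := D.rels_mem
    arity_eq := D.arity_eq
    tid_unique := D.tid_unique }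

/-- `V_E`: the pairs of cells `(⟨t,i⟩,⟨t',j⟩)` with `(t[i],t'[j]) ∈ E`. -/
def VE {S : Schema} (D : DB S) (E : ERel) : VRel :=
  {p | ∃ c c', D.HasVal p.1.1 p.1.2 c ∧ D.HasVal p.2.1 p.2.2 c' ∧ (c, c') ∈ E}

/-- `r'` is a translation of the object rule `r` into a rule for values:
same body, and the head cells `⟨x_t,i⟩`, `⟨y_t,j⟩` are positions of atoms of
the body containing `x` and `y`, with `x_t`, `y_t` the corresponding tid
variables. -/
def IsObjToValRule (r : ObjRule) (r' : ValRule) : Prop :=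
  r'.body = r.body ∧
  (∃ jx : ℕ, ∃ Rx ts, r.body[jx]? = some (Atom.rel Rx ts) ∧
    ts[0]? = some (Term.var r'.xt) ∧ ts[r'.i]? = some (Term.var r.x) ∧ 1 ≤ r'.i) ∧
  (∃ jy : ℕ, ∃ Ry ts, r.body[jy]? = some (Atom.rel Ry ts) ∧
    ts[0]? = some (Term.var r'.yt) ∧ ts[r'.j]? = some (Term.var r.y) ∧ 1 ≤ r'.j)

/-- The hard rule of `Γ_global` for relations `P`, `P'` and (object)
positions `i` of `P` and `j` of `P'`:
`P(x_t,u₁,…,z,…,u_k) ∧ P'(y_t,v₁,…,z,…,v_ℓ) ⇒ EqV(⟨x_t,i⟩,⟨y_t,j⟩)`,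
with `x_t, y_t, z` and all the `u`'s and `v`'s pairwise distinct variables. -/
def globalRule (S : Schema) (P P' i j : ℕ) : ValRule :=
  { body := [Atom.rel P (Term.var 0 ::
        (List.range (S.arity P)).map fun p =>
          if p + 1 = i then Term.var 2 else Term.var (3 + p)),
      Atom.rel P' (Term.var 1 ::
        (List.range (S.arity P')).map fun p =>
          if p + 1 = j then Term.var 2 else Term.var (3 + S.arity P + p))]
    xt := 0, yt := 1, i := i, j := j }

/-- `Sp'` is (a) `Σ' = ⟨∅, Γ_V ∪ Γ_{O⇝V} ∪ Γ_global, Δ⟩` obtained from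
`Sp = ⟨Γ_O, Γ_V, Δ⟩` by the simulation construction. -/
structure IsSimSpec (S : Schema) (Sp Sp' : ERSpec) : Prop where
  hardO_nil : Sp'.hardO = []
  softO_nil : Sp'.softO = []
  dcs_eq : Sp'.dcs = Sp.dcs
  hardV_sub : ∀ r ∈ Sp.hardV, r ∈ Sp'.hardV
  softV_sub : ∀ r ∈ Sp.softV, r ∈ Sp'.softV
  hardO_trans : ∀ r ∈ Sp.hardO, ∃ r' ∈ Sp'.hardV, IsObjToValRule r r'
  softO_trans : ∀ r ∈ Sp.softO, ∃ r' ∈ Sp'.softV, IsObjToValRule r r'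
  global_mem : ∀ P ∈ S.rels, ∀ P' ∈ S.rels, ∀ i j,
    1 ≤ i → i ≤ S.arity P → S.isObjPos P i = true →
    1 ≤ j → j ≤ S.arity P' → S.isObjPos P' j = true →
    globalRule S P P' i j ∈ Sp'.hardV
  hardV_only : ∀ r' ∈ Sp'.hardV, r' ∈ Sp.hardV ∨
    (∃ r ∈ Sp.hardO, IsObjToValRule r r') ∨
    (∃ P P' i j, P ∈ S.rels ∧ P' ∈ S.rels ∧
      1 ≤ i ∧ i ≤ S.arity P ∧ S.isObjPos P i = true ∧
      1 ≤ j ∧ j ≤ S.arity P' ∧ S.isObjPos P' j = true ∧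
      r' = globalRule S P P' i j)
  softV_only : ∀ r' ∈ Sp'.softV, r' ∈ Sp.softV ∨
    ∃ r ∈ Sp.softO, IsObjToValRule r r'

/-- A cell of `D^V` holding an object constant of the original database. -/
def IsObjCell {S : Schema} (D : DB S) (p : Cell) : Prop :=
  ∃ c, D.HasVal p.1 p.2 c ∧ c.kind = CKind.obj

/-- A cell of `D^V` holding a value constant of the original database. -/
def IsValCell {S : Schema} (D : DB S) (p : Cell) : Prop :=
  ∃ c, D.HasVal p.1 p.2 c ∧ c.kind = CKind.val

end LacePlus

namespace LacePlus

/-- `α` is soft-applicable at `⟨E,V⟩`: `α ∉ E ∪ V` and `α` is derived by some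
soft rule evaluated over `D_{E,V}`. -/
def SoftApplicable (sim : SimFam) {S : Schema} (D : DB S) (Sp : ERSpec)
    (E : ERel) (W : VRel) : (Const × Const) ⊕ (Cell × Cell) → Prop
  | .inl p => p ∉ E ∧ ∃ r ∈ Sp.softO, AnswerO sim D E W r p.1 p.2
  | .inr p => p ∉ W ∧ ∃ r ∈ Sp.softV, ∃ t t',
      AnswerV sim D E W r t t' ∧ p = ((t, r.i), (t', r.j))

/-- The candidate solution obtained from `⟨E,V⟩` by adding the pair `α`. -/
def extendBy (S : Schema) (D : DB S) (E : ERel) (W : VRel) :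
    (Const × Const) ⊕ (Cell × Cell) → ERel × VRel
  | .inl p => (EqRel (E ∪ {p}) (ObjD S D), W)
  | .inr p => (E, EqRel (W ∪ {p}) (CellsD S D))

/-! ### Auxiliary lemmas -/

lemma subset_eqRel {α : Type} (P : Set (α × α)) (X : Set α) : P ⊆ EqRel P X :=
  fun p hp => Set.mem_sInter.2 fun _ hR => hR.2 hp

lemma eqRel_le {α : Type} {P R : Set (α × α)} {X : Set α}
    (h : IsEquivOn X R) (hP : P ⊆ R) : EqRel P X ⊆ R :=
  Set.sInter_subset_of_mem ⟨h, hP⟩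

lemma isEquivOn_prod {α : Type} (X : Set α) : IsEquivOn X (X ×ˢ X) :=
  ⟨subset_rfl, fun x hx => ⟨hx, hx⟩, fun _ _ h => ⟨h.2, h.1⟩,
    fun _ _ _ h1 h2 => ⟨h1.1, h2.2⟩⟩

/-- `Good X R`: `R` is an equivalence relation on `X`, or everything. -/
def Good {α : Type} (X : Set α) (R : Set (α × α)) : Prop :=
  IsEquivOn X R ∨ R = Set.univ

lemma good_eqRel {α : Type} (P : Set (α × α)) (X : Set α) : Good X (EqRel P X) := by
  by_cases hP : P ⊆ X ×ˢ X
  · left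
    refine ⟨Set.sInter_subset_of_mem ⟨isEquivOn_prod X, hP⟩, ?_, ?_, ?_⟩
    · intro x hx
      exact Set.mem_sInter.2 fun R hR => hR.1.2.1 x hx
    · intro x y hxy
      exact Set.mem_sInter.2 fun R hR => hR.1.2.2.1 x y (Set.mem_sInter.1 hxy R hR)
    · intro x y z h1 h2
      exact Set.mem_sInter.2 fun R hR =>
        hR.1.2.2.2 x y z (Set.mem_sInter.1 h1 R hR) (Set.mem_sInter.1 h2 R hR)
  · right
    ext p
    simp only [Set.mem_univ, iff_true, EqRel, Set.mem_sInter, Set.mem_setOf_eq]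
    intro R hR
    exact absurd (hR.2.trans hR.1.1) hP

lemma good_subset {α : Type} {P E : Set (α × α)} {X : Set α}
    (hE : Good X E) (hP : P ⊆ E) : EqRel P X ⊆ E := by
  rcases hE with hE | rfl
  · exact eqRel_le hE hP
  · exact Set.subset_univ _

lemma candSol_good (sim : SimFam) {S : Schema} (D : DB S) (Sp : ERSpec)
    {E : ERel} {W : VRel} (h : CandSol sim D Sp E W) :
    Good (ObjD S D) E ∧ Good (CellsD S D) W := by
  induction h with
  | base => exact ⟨good_eqRel _ _, good_eqRel _ _⟩
  | stepO r hr hc hans ih => exact ⟨good_eqRel _ _, ih.2⟩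
  | stepV r hr hc hans ih => exact ⟨ih.1, good_eqRel _ _⟩

/-! ### Monotonicity -/

lemma extArg_mono {S : Schema} (D : DB S) {E E' : ERel} {W W' : VRel}
    (hE : E ⊆ E') (hW : W ⊆ W') (f : Fact) (i : ℕ) :
    extArg D E W f i ⊆ extArg D E' W' f i := by
  unfold extArg
  split
  · rintro c ⟨o, h1, h2⟩; exact ⟨o, h1, hE h2⟩
  · rintro c ⟨p, h1, h2⟩; exact ⟨p, hW h1, h2⟩

lemma satRelAtom_mono {S : Schema} (D : DB S) {E E' : ERel} {W W' : VRel}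
    (hE : E ⊆ E') (hW : W ⊆ W') {g : ℕ → Set Const} {R : ℕ} {ts : List Term}
    (h : SatRelAtom D E W g R ts) :
    ∃ g', SatRelAtom D E' W' g' R ts ∧ ∀ i, i < ts.length → g i ⊆ g' i := by
  obtain ⟨f, hf, hrel, hlen, h0, hmid, hconst⟩ := h
  refine ⟨fun i => if i = 0 then {tidC f.tid}
    else if i ≤ S.arity R then extArg D E' W' f i else Set.univ, ?_⟩
  have hsub : ∀ i, i < ts.length → g i ⊆
      (fun i => if i = 0 then ({tidC f.tid} : Set Const)
        else if i ≤ S.arity R then extArg D E' W' f i else Set.univ) i := by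
    intro i hi
    rcases Nat.eq_zero_or_pos i with rfl | hpos
    · simp [h0]
    · rw [hlen] at hi
      have h2 : i ≤ S.arity R := by omega
      have h3 : i ≠ 0 := by omega
      simp only [h3, if_false, h2, if_true, if_neg h3, if_pos h2]
      rw [hmid i hpos h2]
      exact extArg_mono D hE hW f i
  refine ⟨⟨f, hf, hrel, hlen, by simp, ?_, ?_⟩, hsub⟩
  · intro i h1 h2
    have h3 : i ≠ 0 := by omega
    simp [h3, h2]
  · intro i c hts
    have hi : i < ts.length := (List.getElem?_eq_some_iff.1 hts).1
    exact hsub i hi (hconst i c hts)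

lemma hTerm_mono {q : List Atom} {g g' : ℕ → ℕ → Set Const}
    (hg : ∀ j R ts, q[j]? = some (Atom.rel R ts) → ∀ i, i < ts.length → g j i ⊆ g' j i)
    (u : Term) : hTerm q g u ⊆ hTerm q g' u := by
  cases u with
  | const c => exact subset_rfl
  | var v =>
    intro c hc j R ts hq i hts
    have hi : i < ts.length := (List.getElem?_eq_some_iff.1 hts).1
    exact hg j R ts hq i hi (hc j R ts hq i hts)

lemma sat_mono (sim : SimFam) {S : Schema} (D : DB S) {E E' : ERel} {W W' : VRel}
    {q : List Atom} (hq : NoNeq q) (hE : E ⊆ E') (hW : W ⊆ W') :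
    Sat sim D E W q → Sat sim D E' W' q := by
  rintro ⟨g, hne, hrel, _, hsim⟩
  have H : ∀ j, ∃ gj : ℕ → Set Const, ∀ R ts, q[j]? = some (Atom.rel R ts) →
      SatRelAtom D E' W' gj R ts ∧ ∀ i, i < ts.length → g j i ⊆ gj i := by
    intro j
    by_cases hj : ∃ R ts, q[j]? = some (Atom.rel R ts)
    · obtain ⟨R, ts, hq'⟩ := hj
      obtain ⟨gj, h1, h2⟩ := satRelAtom_mono D hE hW (hrel j R ts hq')
      refine ⟨gj, fun R' ts' hq'' => ?_⟩
      rw [hq'] at hq''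
      simp only [Option.some.injEq, Atom.rel.injEq] at hq''
      obtain ⟨rfl, rfl⟩ := hq''
      exact ⟨h1, h2⟩
    · exact ⟨g j, fun R ts hq' => absurd ⟨R, ts, hq'⟩ hj⟩
  choose g' hg' using H
  have hmono : ∀ u, hTerm q g u ⊆ hTerm q g' u :=
    hTerm_mono fun j R ts hq' i hi => (hg' j R ts hq').2 i hi
  refine ⟨g', fun v hv => (hne v hv).mono (hmono _), fun j R ts hq' => (hg' j R ts hq').1,
    ?_, ?_⟩
  · intro j u u' hq'
    obtain ⟨hlt, heq⟩ := List.getElem?_eq_some_iff.1 hq'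
    have ha : Atom.neq u u' ∈ q := heq ▸ List.getElem_mem hlt
    exact absurd ((by trivial : (Atom.neq u u').isNeq)) (hq _ ha)
  · intro j s u u' hq'
    obtain ⟨c, hc, c', hc', hs⟩ := hsim j s u u' hq'
    exact ⟨c, hmono u hc, c', hmono u' hc', hs⟩

lemma noNeq_subst {q : List Atom} (hq : NoNeq q) (σ : ℕ → Option Const) :
    NoNeq (substQ q σ) := by
  intro a ha
  obtain ⟨b, hb, rfl⟩ := List.mem_map.1 ha
  have hb' := hq b hb
  cases b <;> simp_all [Atom.subst, Atom.isNeq]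

lemma answerO_mono (sim : SimFam) {S : Schema} (D : DB S) {E E' : ERel} {W W' : VRel}
    {r : ObjRule} (hr : NoNeq r.body) (hE : E ⊆ E') (hW : W ⊆ W') {o o' : Const} :
    AnswerO sim D E W r o o' → AnswerO sim D E' W' r o o' :=
  sat_mono sim D (noNeq_subst hr _) hE hW

lemma answerV_mono (sim : SimFam) {S : Schema} (D : DB S) {E E' : ERel} {W W' : VRel}
    {r : ValRule} (hr : NoNeq r.body) (hE : E ⊆ E') (hW : W ⊆ W') {t t' : ℕ} :
    AnswerV sim D E W r t t' → AnswerV sim D E' W' r t t' :=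
  sat_mono sim D (noNeq_subst hr _) hE hW

/-! ### Finiteness -/

lemma objD_finite {S : Schema} (D : DB S) : (ObjD S D).Finite := by
  have hsub : ObjD S D ⊆ ⋃ f ∈ (D.facts : Set Fact), {c | c ∈ f.args} := by
    rintro c ⟨f, hf, i, _, harg⟩
    refine Set.mem_biUnion hf ?_
    unfold Fact.arg at harg
    split at harg
    · exact absurd harg (by simp)
    · obtain ⟨hlt, heq⟩ := List.getElem?_eq_some_iff.1 harg
      exact heq ▸ List.getElem_mem hlt
  exact (Set.Finite.biUnion D.facts.finite_toSet fun f _ => f.args.finite_toSet).subset hsub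

lemma cellsD_finite {S : Schema} (D : DB S) : (CellsD S D).Finite := by
  have hsub : CellsD S D ⊆ ⋃ f ∈ (D.facts : Set Fact),
      ({f.tid} : Set ℕ) ×ˢ Set.Iic (S.arity f.rel) := by
    rintro p ⟨f, hf, h1, h2, h3, h4⟩
    exact Set.mem_biUnion hf ⟨h1.symm, h3⟩
  exact (Set.Finite.biUnion D.facts.finite_toSet fun f _ =>
    (Set.finite_singleton _).prod (Set.finite_Iic _)).subset hsub

instance : Infinite Const :=
  Infinite.of_injective (fun n => ⟨CKind.obj, n⟩) fun a b h => by simpa using h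

lemma prodSelf_ne_univ {α : Type} [Infinite α] {X : Set α} (hX : X.Finite) :
    (X ×ˢ X : Set (α × α)) ≠ Set.univ := by
  intro h
  have hsub : (Set.univ : Set α) ⊆ X :=
    fun c _ => (Set.mem_prod.1 (h.ge (Set.mem_univ (c, c)))).1
  exact Set.infinite_univ (hX.subset hsub)

open Classical in
/-- Adding a missing pair and closing strictly decreases the measure. -/
lemma good_step_measure {α : Type} [Infinite α] {X : Set α} (hX : X.Finite)
    {A : Set (α × α)} (hA : Good X A) {p : α × α} (hp : p ∉ A) :
    ((X ×ˢ X) \ EqRel (A ∪ {p}) X).ncard + (if EqRel (A ∪ {p}) X = Set.univ then 0 else 1)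
      < ((X ×ˢ X) \ A).ncard + (if A = Set.univ then 0 else 1) := by
  have hXX : (X ×ˢ X : Set (α × α)).Finite := hX.prod hX
  have hXXne : (X ×ˢ X : Set (α × α)) ≠ Set.univ := prodSelf_ne_univ hX
  rcases hA with hA | rfl
  · have hAne : A ≠ Set.univ := by
      rintro rfl
      exact hXXne (Set.univ_subset_iff.1 hA.1)
    rcases good_eqRel (A ∪ {p}) X with hA' | hA'
    · have hA'ne : EqRel (A ∪ {p}) X ≠ Set.univ := by
        intro h
        exact hXXne (Set.univ_subset_iff.1 (h ▸ hA'.1))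
      rw [if_neg hA'ne, if_neg hAne]
      have hmem : p ∈ EqRel (A ∪ {p}) X := subset_eqRel _ _ (Set.mem_union_right _ rfl)
      have hss : (X ×ˢ X) \ EqRel (A ∪ {p}) X ⊂ (X ×ˢ X) \ A := by
        rw [Set.ssubset_def]
        constructor
        · exact Set.diff_subset_diff_right (Set.subset_union_left.trans (subset_eqRel _ _))
        · intro hle
          exact (hle ⟨hA'.1 hmem, hp⟩).2 hmem
      exact Nat.add_lt_add_right
        (Set.ncard_lt_ncard hss (hXX.subset Set.diff_subset)) 1
    · rw [hA', if_pos rfl, if_neg hAne, Set.diff_univ, Set.ncard_empty]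
      omega
  · exact absurd (Set.mem_univ p) hp

/-! ### Key lemma: a soft-applicable pair exists below any strictly larger candidate -/

lemma soft_step (sim : SimFam) {S : Schema} {D : DB S} {Sp : ERSpec} (hWF : Sp.WF S)
    {E' : ERel} {W' : VRel} (h' : CandSol sim D Sp E' W') :
    ∀ E W, CandSol sim D Sp E W → SatHard sim D Sp E W → ¬(E' ⊆ E ∧ W' ⊆ W) →
      ∃ α, SoftApplicable sim D Sp E W α ∧ Sum.elim (· ∈ E') (· ∈ W') α := by
  induction h' with
  | base =>
    intro E W hc hh hne
    exact absurd ⟨good_subset (candSol_good sim D Sp hc).1 (Set.empty_subset E),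
      good_subset (candSol_good sim D Sp hc).2 (Set.empty_subset W)⟩ hne
  | @stepO E'' W'' o o' r hr hc'' hans ih =>
    intro E W hc hh hne
    by_cases hsub : E'' ⊆ E ∧ W'' ⊆ W
    · have hNoNeq : NoNeq r.body := by
        rcases hr with hr | hr
        · exact (hWF.1 r hr).1
        · exact (hWF.2.1 r hr).1
      have hans' : AnswerO sim D E W r o o' :=
        answerO_mono sim D hNoNeq hsub.1 hsub.2 hans
      by_cases hmem : (o, o') ∈ E
      · refine absurd ⟨good_subset (candSol_good sim D Sp hc).1 ?_, hsub.2⟩ hne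
        exact Set.union_subset hsub.1 (Set.singleton_subset_iff.2 hmem)
      · rcases hr with hr | hr
        · exact absurd (hh.1 r hr o o' hans') hmem
        · exact ⟨Sum.inl (o, o'), ⟨hmem, r, hr, hans'⟩,
            subset_eqRel _ _ (Set.mem_union_right _ rfl)⟩
    · obtain ⟨α, h1, h2⟩ := ih E W hc hh hsub
      refine ⟨α, h1, ?_⟩
      cases α with
      | inl p => exact (Set.subset_union_left.trans (subset_eqRel _ _)) h2
      | inr p => exact h2
  | @stepV E'' W'' t t' r hr hc'' hans ih =>
    intro E W hc hh hne
    by_cases hsub : E'' ⊆ E ∧ W'' ⊆ W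
    · have hNoNeq : NoNeq r.body := by
        rcases hr with hr | hr
        · exact (hWF.2.2.1 r hr).1
        · exact (hWF.2.2.2.1 r hr).1
      have hans' : AnswerV sim D E W r t t' :=
        answerV_mono sim D hNoNeq hsub.1 hsub.2 hans
      by_cases hmem : ((t, r.i), (t', r.j)) ∈ W
      · refine absurd ⟨hsub.1, good_subset (candSol_good sim D Sp hc).2 ?_⟩ hne
        exact Set.union_subset hsub.2 (Set.singleton_subset_iff.2 hmem)
      · rcases hr with hr | hr
        · exact absurd (hh.2 r hr t t' hans') hmem
        · exact ⟨Sum.inr ((t, r.i), (t', r.j)), ⟨hmem, r, hr, t, t', hans', rfl⟩,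
            subset_eqRel _ _ (Set.mem_union_right _ rfl)⟩
    · obtain ⟨α, h1, h2⟩ := ih E W hc hh hsub
      refine ⟨α, h1, ?_⟩
      cases α with
      | inl p => exact h2
      | inr p => exact (Set.subset_union_left.trans (subset_eqRel _ _)) h2

/-! ### Existence of the hard closure -/

lemma closure_exists (sim : SimFam) {S : Schema} {D : DB S} {Sp : ERSpec} (hWF : Sp.WF S)
    {E0 : ERel} {W0 : VRel} (h0 : CandSol sim D Sp E0 W0) :
    ∃ Ea Wa, IsHardClosure sim D Sp E0 W0 Ea Wa := by
  classical
  suffices h : ∀ n (A : ERel) (B : VRel),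
      (((ObjD S D ×ˢ ObjD S D) \ A).ncard + (if A = Set.univ then 0 else 1)) +
      (((CellsD S D ×ˢ CellsD S D) \ B).ncard + (if B = Set.univ then 0 else 1)) = n →
      CandSol sim D Sp A B → E0 ⊆ A → W0 ⊆ B →
      (∀ E W, CandSol sim D Sp E W → E0 ⊆ E → W0 ⊆ W → SatHard sim D Sp E W →
        A ⊆ E ∧ B ⊆ W) →
      ∃ Ea Wa, IsHardClosure sim D Sp E0 W0 Ea Wa by
    exact h _ E0 W0 rfl h0 subset_rfl subset_rfl fun E W _ h1 h2 _ => ⟨h1, h2⟩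
  intro n
  induction n using Nat.strong_induction_on with
  | _ n ih =>
    intro A B hn hc hE0 hW0 hmin
    by_cases hsat : SatHard sim D Sp A B
    · exact ⟨A, B, hc, hE0, hW0, hsat, hmin⟩
    · unfold SatHard at hsat
      rw [not_and_or] at hsat
      unfold SatObjRule SatValRule at hsat
      push_neg at hsat
      rcases hsat with ⟨r, hr, o, o', hans, hmem⟩ | ⟨r, hr, t, t', hans, hmem⟩
      · have hNoNeq : NoNeq r.body := (hWF.1 r hr).1
        have hc' : CandSol sim D Sp (EqRel (A ∪ {(o, o')}) (ObjD S D)) B :=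
          CandSol.stepO r (Or.inl hr) hc hans
        have hlt : (((ObjD S D ×ˢ ObjD S D) \ EqRel (A ∪ {(o, o')}) (ObjD S D)).ncard +
            (if EqRel (A ∪ {(o, o')}) (ObjD S D) = Set.univ then 0 else 1)) +
            (((CellsD S D ×ˢ CellsD S D) \ B).ncard + (if B = Set.univ then 0 else 1)) < n := by
          rw [← hn]
          exact Nat.add_lt_add_right
            (good_step_measure (objD_finite D) (candSol_good sim D Sp hc).1 hmem) _
        refine ih _ hlt _ _ rfl hc'
          (hE0.trans (Set.subset_union_left.trans (subset_eqRel _ _))) hW0 ?_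
        intro E W h1 h2 h3 h4
        obtain ⟨hAE, hBW⟩ := hmin E W h1 h2 h3 h4
        refine ⟨good_subset (candSol_good sim D Sp h1).1 ?_, hBW⟩
        refine Set.union_subset hAE (Set.singleton_subset_iff.2 ?_)
        exact h4.1 r hr o o' (answerO_mono sim D hNoNeq hAE hBW hans)
      · have hNoNeq : NoNeq r.body := (hWF.2.2.1 r hr).1
        have hc' : CandSol sim D Sp A (EqRel (B ∪ {((t, r.i), (t', r.j))}) (CellsD S D)) :=
          CandSol.stepV r (Or.inl hr) hc hans
        have hlt : (((ObjD S D ×ˢ ObjD S D) \ A).ncard + (if A = Set.univ then 0 else 1)) +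
            (((CellsD S D ×ˢ CellsD S D) \ EqRel (B ∪ {((t, r.i), (t', r.j))}) (CellsD S D)).ncard +
            (if EqRel (B ∪ {((t, r.i), (t', r.j))}) (CellsD S D) = Set.univ then 0 else 1)) < n := by
          rw [← hn]
          exact Nat.add_lt_add_left
            (good_step_measure (cellsD_finite D) (candSol_good sim D Sp hc).2 hmem) _
        refine ih _ hlt _ _ rfl hc' hE0
          (hW0.trans (Set.subset_union_left.trans (subset_eqRel _ _))) ?_
        intro E W h1 h2 h3 h4
        obtain ⟨hAE, hBW⟩ := hmin E W h1 h2 h3 h4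
        refine ⟨hAE, good_subset (candSol_good sim D Sp h1).2 ?_⟩
        refine Set.union_subset hBW (Set.singleton_subset_iff.2 ?_)
        exact h4.2 r hr t t' (answerV_mono sim D hNoNeq hAE hBW hans)

/-- Suppose no denial constraint of `Σ` contains inequality atoms and
`⟨E,V⟩ ∈ Sol(D,Σ)`. Then `⟨E,V⟩ ∈ MaxSol(D,Σ)` iff for every soft-applicable
pair `α` at `⟨E,V⟩`, the hard closure `⟨E_α,V_α⟩` of the candidate solution
obtained by adding `α` satisfies `D_{E_α,V_α} ⊭ Δ`. -/
theorem maxSol_characterization (sim : SimFam) {S : Schema} (D : DB S)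
    (hD : WellTyped S D) (Sp : ERSpec) (hWF : Sp.WF S)
    (hdcs : ∀ δ ∈ Sp.dcs, NoNeq δ)
    (E : ERel) (W : VRel) (hsol : Solution sim D Sp E W) :
    MaxSolution sim D Sp E W ↔
      ∀ α, SoftApplicable sim D Sp E W α →
        ∀ Ea Wa,
          IsHardClosure sim D Sp (extendBy S D E W α).1 (extendBy S D E W α).2 Ea Wa →
          ∃ δ ∈ Sp.dcs, Sat sim D Ea Wa δ := by
  obtain ⟨hcand, hhard, hdcsat⟩ := hsol
  constructor
  · rintro ⟨-, hmax⟩ α hα Ea Wa hclo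
    by_contra hno
    push_neg at hno
    apply hmax
    refine ⟨Ea, Wa, ⟨hclo.1, hclo.2.2.2.1, hno⟩, ?_⟩
    cases α with
    | inl p =>
      have h1 : EqRel (E ∪ {p}) (ObjD S D) ⊆ Ea := hclo.2.1
      have h2 : W ⊆ Wa := hclo.2.2.1
      have hp : p ∈ Ea := h1 (subset_eqRel _ _ (Set.mem_union_right _ rfl))
      exact ⟨(Set.subset_union_left.trans (subset_eqRel _ _)).trans h1, h2,
        fun hle => hα.1 (hle.1 hp)⟩
    | inr p =>
      have h1 : E ⊆ Ea := hclo.2.1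
      have h2 : EqRel (W ∪ {p}) (CellsD S D) ⊆ Wa := hclo.2.2.1
      have hp : p ∈ Wa := h2 (subset_eqRel _ _ (Set.mem_union_right _ rfl))
      exact ⟨h1, (Set.subset_union_left.trans (subset_eqRel _ _)).trans h2,
        fun hle => hα.1 (hle.2 hp)⟩
  · intro hyp
    refine ⟨⟨hcand, hhard, hdcsat⟩, ?_⟩
    rintro ⟨E', W', ⟨hcand', hhard', hdcsat'⟩, hEE', hWW', hne⟩
    obtain ⟨α, hα, hmemα⟩ := soft_step sim hWF hcand' E W hcand hhard hne
    cases α with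
    | inl p =>
      obtain ⟨hpE, r, hr, hans⟩ := hα
      have hc0 : CandSol sim D Sp (EqRel (E ∪ {p}) (ObjD S D)) W :=
        CandSol.stepO r (Or.inr hr) hcand hans
      obtain ⟨Ea, Wa, hclo⟩ := closure_exists sim hWF hc0
      obtain ⟨δ, hδ, hsatδ⟩ := hyp (Sum.inl p) ⟨hpE, r, hr, hans⟩ Ea Wa hclo
      have hsub := hclo.2.2.2.2 E' W' hcand'
        (good_subset (candSol_good sim D Sp hcand').1
          (Set.union_subset hEE' (Set.singleton_subset_iff.2 hmemα))) hWW' hhard'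
      exact hdcsat' δ hδ (sat_mono sim D (hdcs δ hδ) hsub.1 hsub.2 hsatδ)
    | inr p =>
      obtain ⟨hpW, r, hr, t, t', hans, rfl⟩ := hα
      have hc0 : CandSol sim D Sp E (EqRel (W ∪ {((t, r.i), (t', r.j))}) (CellsD S D)) :=
        CandSol.stepV r (Or.inr hr) hcand hans
      obtain ⟨Ea, Wa, hclo⟩ := closure_exists sim hWF hc0
      obtain ⟨δ, hδ, hsatδ⟩ := hyp (Sum.inr ((t, r.i), (t', r.j)))
        ⟨hpW, r, hr, t, t', hans, rfl⟩ Ea Wa hclo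
      have hsub := hclo.2.2.2.2 E' W' hcand' hEE'
        (good_subset (candSol_good sim D Sp hcand').2
          (Set.union_subset hWW' (Set.singleton_subset_iff.2 hmemα))) hhard'
      exact hdcsat' δ hδ (sat_mono sim D (hdcs δ hδ) hsub.1 hsub.2 hsatδ)


end LacePlus
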